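/- arXiv:2511.06695 — 8 statements merged into one kernel-verified Lean document; each statement's English description precedes it below -/
import Mathlib

section
/- Let n ≥ 1 and let C be a real invertible n×n matrix such that the real part of x*Cx is strictly positive for every nonzero vector x ∈ ℂⁿ (where x* denotes the conjugate transpose of x). Define Φ := −CᵀC⁻¹, regarded as a complex n×n matrix. Then every complex eigenvalue λ of Φ satisfies |λ| = 1. -/
open Matrix

/-- If a real invertible `n × n` matrix `C` satisfies that `x* C x` has strictly positive
real part for every nonzero complex vector `x`, then every complex eigenvalue `μ` of the
Coxeter matrix `Φ = -Cᵀ C⁻¹` satisfies `|μ| = 1`. -/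
theorem stmt_1 (n : ℕ) (hn : 1 ≤ n) (C : Matrix (Fin n) (Fin n) ℝ)
    (hinv : IsUnit C)
    (hC : ∀ x : Fin n → ℂ, x ≠ 0 →
      0 < (star x ⬝ᵥ ((C.map Complex.ofReal) *ᵥ x)).re)
    (Φ : Matrix (Fin n) (Fin n) ℂ)
    (hΦ : Φ = (-(Cᵀ * C⁻¹)).map Complex.ofReal) :
    ∀ (μ : ℂ) (x : Fin n → ℂ), x ≠ 0 → Φ *ᵥ x = μ • x → ‖μ‖ = 1 := by
  intro μ x hx0 heig
  set f : ℝ →+* ℂ := Complex.ofRealHom with hf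
  set A : Matrix (Fin n) (Fin n) ℂ := C.map f with hA
  set y : Fin n → ℂ := (C⁻¹.map f) *ᵥ x with hy
  have hdet : IsUnit C.det := (Matrix.isUnit_iff_isUnit_det C).mp hinv
  -- A *ᵥ y = x
  have hxy : A *ᵥ y = x := by
    rw [hy, mulVec_mulVec, hA, ← Matrix.map_mul, Matrix.mul_nonsing_inv C hdet,
      Matrix.map_one f (map_zero f) (map_one f), one_mulVec]
  -- y ≠ 0
  have hy0 : y ≠ 0 := by
    intro h
    apply hx0
    rw [← hxy, h, mulVec_zero]
  -- rewrite the eigen equation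
  have heq : -(Aᵀ *ᵥ y) = μ • x := by
    rw [← heig, hΦ]
    have : (-(Cᵀ * C⁻¹)).map (Complex.ofReal) = -(Aᵀ * (C⁻¹.map f)) := by
      ext i j
      simp [Matrix.map_apply, Matrix.mul_apply, hA, Matrix.transpose_apply, Finset.sum_neg_distrib, hf]
    rw [this, neg_mulVec, ← mulVec_mulVec]
  set s : ℂ := star y ⬝ᵥ (A *ᵥ y) with hs
  have hspos : 0 < s.re := hC y hy0
  have hsne : s ≠ 0 := fun h => by simp [h] at hspos
  -- key transpose identity: star y ⬝ᵥ (Aᵀ *ᵥ y) = star s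
  have key : star y ⬝ᵥ (Aᵀ *ᵥ y) = star s := by
    rw [hs]
    simp only [dotProduct, mulVec, dotProduct, Pi.star_apply, star_sum, star_mul',
      Matrix.transpose_apply, hA, Matrix.map_apply, Finset.mul_sum]
    rw [Finset.sum_comm]
    apply Finset.sum_congr rfl
    intro i _
    apply Finset.sum_congr rfl
    intro j _
    have : star (f (C i j)) = f (C i j) := by
      simp [hf, Complex.conj_ofReal]
    rw [this, star_star]
    ring
  -- dot both sides of heq with star y
  have hdot : star y ⬝ᵥ (-(Aᵀ *ᵥ y)) = star y ⬝ᵥ (μ • x) := by rw [heq]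
  have hfinal : -(star s) = μ * s := by
    rw [dotProduct_neg, key] at hdot
    rw [hdot, dotProduct_smul, ← hxy, smul_eq_mul]
  -- take absolute values
  have habs : ‖s‖ = ‖μ‖ * ‖s‖ := by
    calc ‖s‖ = ‖(-(star s))‖ := by simp
      _ = ‖(μ * s)‖ := by rw [hfinal]
      _ = ‖μ‖ * ‖s‖ := norm_mul _ _
  have : ‖s‖ ≠ 0 := fun h => hsne (by simpa using h)
  have h1 : ‖μ‖ * ‖s‖ = 1 * ‖s‖ := by
    rw [one_mul]; exact habs.symm
  exact mul_right_cancel₀ this h1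
end

section
/- Let n ≥ 1 and let C be a real invertible n×n matrix such that the real part of x*Cx is strictly positive for every nonzero vector x ∈ ℂⁿ (where x* denotes the conjugate transpose of x). Define Φ := −CᵀC⁻¹, regarded as a complex n×n matrix. Then 1 is not an eigenvalue of Φ; that is, there is no nonzero x ∈ ℂⁿ with Φx = x. -/
open Matrix

/-- If a real invertible `n × n` matrix `C` satisfies that `x* C x` has strictly positive
real part for every nonzero complex vector `x`, then `1` is not an eigenvalue of the
Coxeter matrix `Φ = -Cᵀ C⁻¹`: there is no nonzero complex vector `x` with `Φ x = x`. -/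
theorem stmt_2 (n : ℕ) (hn : 1 ≤ n) (C : Matrix (Fin n) (Fin n) ℝ)
    (hinv : IsUnit C)
    (hC : ∀ x : Fin n → ℂ, x ≠ 0 →
      0 < (star x ⬝ᵥ ((C.map Complex.ofReal) *ᵥ x)).re)
    (Φ : Matrix (Fin n) (Fin n) ℂ)
    (hΦ : Φ = (-(Cᵀ * C⁻¹)).map Complex.ofReal) :
    ¬ ∃ x : Fin n → ℂ, x ≠ 0 ∧ Φ *ᵥ x = x := by
  rintro ⟨x, hx, hfix⟩
  have hCC : C * C⁻¹ = 1 := Matrix.mul_nonsing_inv C (isUnit_iff_isUnit_det C |>.mp hinv)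
  have hmapmul : ∀ A B : Matrix (Fin n) (Fin n) ℝ,
      (A * B).map Complex.ofReal = A.map Complex.ofReal * B.map Complex.ofReal := by
    intro A B
    exact Matrix.map_mul (f := Complex.ofRealHom)
  set Cc : Matrix (Fin n) (Fin n) ℂ := C.map Complex.ofReal with hCc
  set y : Fin n → ℂ := (C⁻¹.map Complex.ofReal) *ᵥ x with hy
  have hxy : Cc *ᵥ y = x := by
    rw [hy, mulVec_mulVec, hCc, ← hmapmul, hCC]
    simp
  have hty : (Cᵀ.map Complex.ofReal) *ᵥ y = -x := by
    have h := hfix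
    rw [hΦ] at h
    have hmap : (-(Cᵀ * C⁻¹)).map Complex.ofReal
        = -((Cᵀ.map Complex.ofReal) * (C⁻¹.map Complex.ofReal)) := by
      rw [← hmapmul]
      ext i j
      simp
    rw [hmap, neg_mulVec, ← mulVec_mulVec] at h
    rw [hy]
    exact neg_eq_iff_eq_neg.mp h
  have hy0 : y ≠ 0 := by
    intro h
    rw [h, mulVec_zero] at hxy
    exact hx hxy.symm
  have hpos := hC y hy0
  have hconj : star y ⬝ᵥ ((Cᵀ.map Complex.ofReal) *ᵥ y)
      = star (star y ⬝ᵥ (Cc *ᵥ y)) := by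
    rw [hCc]
    simp only [dotProduct, mulVec, Complex.star_def, map_sum, _root_.map_mul, Complex.conj_ofReal,
      Matrix.map_apply, transpose_apply, Pi.star_apply, Complex.conj_conj, Finset.mul_sum]
    rw [Finset.sum_comm]
    congr 1; ext i; congr 1; ext j
    ring
  have hzero : star y ⬝ᵥ ((Cᵀ.map Complex.ofReal) *ᵥ y) = - (star y ⬝ᵥ (Cc *ᵥ y)) := by
    rw [hty, hxy, dotProduct_neg]
  have h2 : (star (star y ⬝ᵥ (Cc *ᵥ y))).re = -((star y ⬝ᵥ (Cc *ᵥ y)).re) := by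
    rw [← hconj, hzero, Complex.neg_re]
  rw [Complex.star_def, Complex.conj_re] at h2
  linarith
end

section
/- Let n ≥ 1 and let C be a real invertible n×n matrix such that the real part of x*Cx is strictly positive for every nonzero vector x ∈ ℂⁿ (where x* denotes the conjugate transpose of x). Define Φ := −CᵀC⁻¹, regarded as a complex n×n matrix. Then Φ is diagonalizable over ℂ; equivalently, for every λ ∈ ℂ and every y ∈ ℂⁿ, (Φ − λI)²y = 0 implies (Φ − λI)y = 0 (there are no generalized eigenvectors of rank 2). -/
open Matrix

/-- If a real invertible `n × n` matrix `C` satisfies that `x* C x` has strictly positive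
real part for every nonzero complex vector `x`, then the Coxeter matrix `Φ = -Cᵀ C⁻¹` is
diagonalizable over `ℂ`: for every `μ : ℂ` and every vector `y`, `(Φ - μ I)² y = 0`
implies `(Φ - μ I) y = 0` (no generalized eigenvectors of rank 2). -/
theorem stmt_3 (n : ℕ) (hn : 1 ≤ n) (C : Matrix (Fin n) (Fin n) ℝ)
    (hinv : IsUnit C)
    (hC : ∀ x : Fin n → ℂ, x ≠ 0 →
      0 < (star x ⬝ᵥ ((C.map Complex.ofReal) *ᵥ x)).re)
    (Φ : Matrix (Fin n) (Fin n) ℂ)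
    (hΦ : Φ = (-(Cᵀ * C⁻¹)).map Complex.ofReal) :
    ∀ (μ : ℂ) (y : Fin n → ℂ),
      ((Φ - μ • (1 : Matrix (Fin n) (Fin n) ℂ)) ^ 2) *ᵥ y = 0 →
        (Φ - μ • (1 : Matrix (Fin n) (Fin n) ℂ)) *ᵥ y = 0 := by
  intro μ y hsq
  set M : Matrix (Fin n) (Fin n) ℂ := C.map Complex.ofReal with hM
  set N : Matrix (Fin n) (Fin n) ℂ := C⁻¹.map Complex.ofReal with hN
  have hdet : IsUnit C.det := (Matrix.isUnit_iff_isUnit_det C).mp hinv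
  have hMN : M * N = 1 := by
    show C.map ⇑Complex.ofRealHom * C⁻¹.map ⇑Complex.ofRealHom = 1
    rw [← Matrix.map_mul, Matrix.mul_nonsing_inv C hdet,
      Matrix.map_one _ (map_zero _) (map_one _)]
  have hΦ' : Φ = -(Mᵀ * N) := by
    rw [hΦ]
    ext i j
    simp [hM, hN, Matrix.map_apply, Matrix.neg_apply, Matrix.mul_apply,
      Matrix.transpose_apply]
  set z := (Φ - μ • (1 : Matrix (Fin n) (Fin n) ℂ)) *ᵥ y with hz
  by_contra hzne
  have h0 : (Φ - μ • (1 : Matrix (Fin n) (Fin n) ℂ)) *ᵥ z = 0 := by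
    rw [hz, Matrix.mulVec_mulVec, ← pow_two]
    exact hsq
  have h1 : Φ *ᵥ z = μ • z := by
    rw [Matrix.sub_mulVec, sub_eq_zero, Matrix.smul_mulVec, Matrix.one_mulVec] at h0
    exact h0
  have h2 : Φ *ᵥ y = μ • y + z := by
    rw [hz, Matrix.sub_mulVec, Matrix.smul_mulVec, Matrix.one_mulVec]
    abel
  set u := N *ᵥ z with hu'
  set v := N *ᵥ y with hv'
  have hMu : M *ᵥ u = z := by rw [hu', Matrix.mulVec_mulVec, hMN, Matrix.one_mulVec]
  have hMv : M *ᵥ v = y := by rw [hv', Matrix.mulVec_mulVec, hMN, Matrix.one_mulVec]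
  have hu : u ≠ 0 := by
    intro h
    exact hzne (by rw [← hMu, h, Matrix.mulVec_zero])
  have e1 : Mᵀ *ᵥ u = -(μ • z) := by
    have : -(Mᵀ *ᵥ u) = μ • z := by
      rw [← h1, hΦ', Matrix.neg_mulVec, ← Matrix.mulVec_mulVec]
    rw [← this, neg_neg]
  have e2 : Mᵀ *ᵥ v = -(μ • y + z) := by
    have : -(Mᵀ *ᵥ v) = μ • y + z := by
      rw [← h2, hΦ', Matrix.neg_mulVec, ← Matrix.mulVec_mulVec]
    rw [← this, neg_neg]
  have hMH : Mᴴ = Mᵀ := by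
    ext i j
    simp [hM, Matrix.conjTranspose_apply, Matrix.map_apply, Matrix.transpose_apply]
  have hstar : ∀ a b : Fin n → ℂ, star a ⬝ᵥ (Mᵀ *ᵥ b) = star (star b ⬝ᵥ (M *ᵥ a)) := by
    intro a b
    rw [Matrix.dotProduct_mulVec, Matrix.vecMul_transpose]
    rw [star_dotProduct, star_star, Matrix.star_mulVec, hMH, Matrix.vecMul_transpose]
  set β := star u ⬝ᵥ z with hβ'
  have hβre : 0 < β.re := by
    have := hC u hu
    rw [hMu] at this
    exact this
  have hβ0 : β ≠ 0 := fun h => by simp [h] at hβre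
  have hconj : star β = -(μ * β) := by
    have h := hstar u u
    rw [hMu, e1] at h
    rw [← h]
    simp only [dotProduct_neg, dotProduct_smul, smul_eq_mul, ← hβ']
  have hμ : star μ * μ = 1 := by
    have h := congrArg star hconj
    rw [star_star, star_neg, star_mul', hconj] at h
    have h2 : (star μ * μ - 1) * β = 0 := by linear_combination -h
    rcases mul_eq_zero.mp h2 with h3 | h3
    · exact sub_eq_zero.mp h3
    · exact absurd h3 hβ0
  set δ := star u ⬝ᵥ y with hδ'
  set w := star v ⬝ᵥ z with hw'
  have hγ : star w = -(μ * δ + β) := by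
    have h := hstar u v
    rw [hMu, e2] at h
    rw [← h]
    simp only [dotProduct_neg, dotProduct_add, dotProduct_smul,
      smul_eq_mul, ← hδ', ← hβ']
  have hδ : star δ = -(μ * w) := by
    have h := hstar v u
    rw [hMv, e1] at h
    rw [← h]
    simp only [dotProduct_neg, dotProduct_smul, smul_eq_mul, ← hw']
  have hδ2 : δ = -(star μ * star w) := by
    have h := congrArg star hδ
    rw [star_star, star_neg, star_mul'] at h
    linear_combination h
  have hfin : β = 0 := by
    rw [hδ2] at hγ
    have hμ' : μ * star μ = 1 := by rw [mul_comm]; exact hμ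
    linear_combination hγ + star w * hμ'
  exact hβ0 hfin
end

section
/- Let n ≥ 1 and let C be a real n×n matrix. Then the following are equivalent: (i) the real part of x*Cx is strictly positive for every nonzero x ∈ ℂⁿ (where x* is the conjugate transpose of x); (ii) C is invertible and vᵀC⁻ᵀv > 0 for every nonzero v ∈ ℝⁿ, where C⁻ᵀ denotes the inverse of the transpose of C. -/
open Matrix
lemma re_quad (n : ℕ) (C : Matrix (Fin n) (Fin n) ℝ) (x : Fin n → ℂ) :
    (star x ⬝ᵥ ((C.map Complex.ofReal) *ᵥ x)).re
      = (fun i => (x i).re) ⬝ᵥ (C *ᵥ fun i => (x i).re)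
        + (fun i => (x i).im) ⬝ᵥ (C *ᵥ fun i => (x i).im) := by
  simp only [dotProduct, mulVec, Matrix.map_apply, Pi.star_apply, Complex.star_def,
    Complex.re_sum, Complex.mul_re, Complex.conj_re, Complex.conj_im, dotProduct,
    Finset.mul_sum, Finset.sum_add_distrib]
  rw [← Finset.sum_add_distrib]
  refine Finset.sum_congr rfl fun i _ => ?_
  simp [Complex.im_sum, Complex.re_sum, Finset.mul_sum, Finset.sum_comm, mul_comm,
    ← Finset.sum_add_distrib]

lemma real_pos_iff (n : ℕ) (C : Matrix (Fin n) (Fin n) ℝ) :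
    (∀ x : Fin n → ℂ, x ≠ 0 →
        0 < (star x ⬝ᵥ ((C.map Complex.ofReal) *ᵥ x)).re) ↔
      (∀ v : Fin n → ℝ, v ≠ 0 → 0 < v ⬝ᵥ (C *ᵥ v)) := by
  constructor
  · intro h v hv
    have hx : (fun i => (v i : ℂ)) ≠ 0 := by
      intro hz
      apply hv
      funext i
      have := congrFun hz i
      simpa using this
    have := h _ hx
    rw [re_quad] at this
    simpa using this
  · intro h x hx
    have hnn : ∀ v : Fin n → ℝ, 0 ≤ v ⬝ᵥ (C *ᵥ v) := by
      intro v
      rcases eq_or_ne v 0 with rfl | hv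
      · simp
      · exact (h v hv).le
    rw [re_quad]
    rcases eq_or_ne (fun i => (x i).re) 0 with hre | hre
    · have him : (fun i => (x i).im) ≠ 0 := by
        intro hz
        apply hx
        funext i
        have h1 := congrFun hre i
        have h2 := congrFun hz i
        simp only [Pi.zero_apply] at h1 h2
        exact Complex.ext h1 h2
      have := h _ him
      have := hnn (fun i => (x i).re)
      linarith [h _ him]
    · linarith [h _ hre, hnn (fun i => (x i).im)]

/-- For a real `n × n` matrix `C`, the quadratic form `x ↦ x* C x` has strictly positive
real part for every nonzero complex vector `x` if and only if `C` is invertible and the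
Euler form `v ↦ vᵀ C⁻ᵀ v` is positive definite on real vectors. -/
theorem stmt_4 (n : ℕ) (hn : 1 ≤ n) (C : Matrix (Fin n) (Fin n) ℝ) :
    (∀ x : Fin n → ℂ, x ≠ 0 →
        0 < (star x ⬝ᵥ ((C.map Complex.ofReal) *ᵥ x)).re) ↔
      (IsUnit C ∧ ∀ v : Fin n → ℝ, v ≠ 0 → 0 < v ⬝ᵥ ((Cᵀ)⁻¹ *ᵥ v)) := by
  rw [real_pos_iff]
  constructor
  · intro h
    have hunit : IsUnit C := by
      rw [← Matrix.mulVec_injective_iff_isUnit]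
      intro a b hab
      by_contra hne
      have : a - b ≠ 0 := sub_ne_zero.mpr hne
      have hpos := h _ this
      have : C *ᵥ (a - b) = 0 := by
        rw [Matrix.mulVec_sub, hab, sub_self]
      rw [this] at hpos
      simp at hpos
    refine ⟨hunit, fun v hv => ?_⟩
    have hT : IsUnit Cᵀ := (Matrix.isUnit_transpose C).mpr hunit
    have hTd : IsUnit Cᵀ.det := by rwa [Matrix.isUnit_iff_isUnit_det] at hT
    set w := (Cᵀ)⁻¹ *ᵥ v with hw
    have hvw : Cᵀ *ᵥ w = v := by
      rw [hw, Matrix.mulVec_mulVec, Matrix.mul_nonsing_inv _ hTd, Matrix.one_mulVec]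
    have hwne : w ≠ 0 := by
      intro hz
      apply hv
      rw [← hvw, hz, Matrix.mulVec_zero]
    calc v ⬝ᵥ (Cᵀ)⁻¹ *ᵥ v = (Cᵀ *ᵥ w) ⬝ᵥ w := by rw [hvw]
      _ = w ⬝ᵥ (C *ᵥ w) := by
          rw [Matrix.mulVec_transpose, ← Matrix.dotProduct_mulVec, dotProduct_comm]
      _ > 0 := h w hwne
  · rintro ⟨hunit, h⟩ v hv
    have hT : IsUnit Cᵀ := (Matrix.isUnit_transpose C).mpr hunit
    have hTd : IsUnit Cᵀ.det := by rwa [Matrix.isUnit_iff_isUnit_det] at hT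
    set w := Cᵀ *ᵥ v with hw
    have hwv : (Cᵀ)⁻¹ *ᵥ w = v := by
      rw [hw, Matrix.mulVec_mulVec, Matrix.nonsing_inv_mul _ hTd, Matrix.one_mulVec]
    have hwne : w ≠ 0 := by
      intro hz
      apply hv
      rw [← hwv, hz, Matrix.mulVec_zero]
    calc v ⬝ᵥ (C *ᵥ v) = (Cᵀ *ᵥ v) ⬝ᵥ v := by
          rw [Matrix.mulVec_transpose, ← Matrix.dotProduct_mulVec, dotProduct_comm]
      _ = w ⬝ᵥ (Cᵀ)⁻¹ *ᵥ w := by rw [hwv, hw, dotProduct_comm]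
      _ > 0 := h w hwne
end

section
/- Let ℓ ≥ 3 be an integer. Consider the matrices A = [[−1, 0], [ℓ, 1]] and B = [[1, ℓ], [0, −1]] in GL(2, ℤ) (both have determinant −1). Then neither the negative identity matrix −I nor the matrix [[0, −1], [−1, 0]] belongs to the subgroup of GL(2, ℤ) generated by A and B. -/
open Matrix

/-- For `ℓ ≥ 3`, neither `-I` nor `[[0,-1],[-1,0]]` belongs to the subgroup of
`GL(2, ℤ)` generated by `A = [[-1,0],[ℓ,1]]` and `B = [[1,ℓ],[0,-1]]`. -/
theorem stmt_6 (ℓ : ℤ) (hℓ : 3 ≤ ℓ)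
    (A B : Matrix.GeneralLinearGroup (Fin 2) ℤ)
    (hA : (A : Matrix (Fin 2) (Fin 2) ℤ) = !![-1, 0; ℓ, 1])
    (hB : (B : Matrix (Fin 2) (Fin 2) ℤ) = !![1, ℓ; 0, -1]) :
    ∀ M ∈ Subgroup.closure {A, B},
      (M : Matrix (Fin 2) (Fin 2) ℤ) ≠ -1 ∧
      (M : Matrix (Fin 2) (Fin 2) ℤ) ≠ !![0, -1; -1, 0] := by
  have hA2 : A * A = 1 := by
    ext : 1
    rw [Units.val_mul, hA, Units.val_one, Matrix.mul_fin_two, Matrix.one_fin_two]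
    norm_num
  have hB2 : B * B = 1 := by
    ext : 1
    rw [Units.val_mul, hB, Units.val_one, Matrix.mul_fin_two, Matrix.one_fin_two]
    norm_num
  have hAinv : A⁻¹ = A := inv_eq_of_mul_eq_one_right hA2
  have hBinv : B⁻¹ = B := inv_eq_of_mul_eq_one_right hB2
  have hconj1 : A * (A * B) * A = (A * B)⁻¹ := by
    rw [_root_.mul_inv_rev, hAinv, hBinv, ← mul_assoc, hA2, one_mul]
  have hconj : ∀ n : ℤ, A * (A * B) ^ n * A = (A * B) ^ (-n) := by
    intro n
    have h := map_zpow (MulAut.conj A) (A * B) n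
    simp only [MulAut.conj_apply] at h
    rw [hAinv] at h
    rw [h, hconj1, _root_.inv_zpow, ← _root_.zpow_neg]
  have comm : ∀ n : ℤ, (A * B) ^ n * A = A * (A * B) ^ (-n) := by
    intro n
    have h := hconj (-n)
    rw [neg_neg] at h
    calc (A * B) ^ n * A = (A * (A * B) ^ (-n) * A) * A := by rw [h]
      _ = A * (A * B) ^ (-n) * (A * A) := by rw [mul_assoc]
      _ = A * (A * B) ^ (-n) := by rw [hA2, mul_one]
  have key : ∀ M ∈ Subgroup.closure {A, B},
      (∃ n : ℤ, M = (A * B) ^ n) ∨ (∃ n : ℤ, M = A * (A * B) ^ n) := by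
    intro M hM
    induction hM using Subgroup.closure_induction with
    | mem x hx =>
      simp only [Set.mem_insert_iff, Set.mem_singleton_iff] at hx
      rcases hx with rfl | rfl
      · exact Or.inr ⟨0, by rw [zpow_zero, mul_one]⟩
      · exact Or.inr ⟨1, by rw [zpow_one, ← mul_assoc, hA2, one_mul]⟩
    | one => exact Or.inl ⟨0, (zpow_zero _).symm⟩
    | mul x y hx hy ihx ihy =>
      rcases ihx with ⟨m, rfl⟩ | ⟨m, rfl⟩ <;> rcases ihy with ⟨n, rfl⟩ | ⟨n, rfl⟩
      · exact Or.inl ⟨m + n, (_root_.zpow_add _ m n).symm⟩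
      · refine Or.inr ⟨-m + n, ?_⟩
        calc (A * B) ^ m * (A * (A * B) ^ n) = ((A * B) ^ m * A) * (A * B) ^ n := by
              simp only [mul_assoc]
          _ = A * (A * B) ^ (-m) * (A * B) ^ n := by rw [comm m]
          _ = A * ((A * B) ^ (-m) * (A * B) ^ n) := by rw [mul_assoc]
          _ = A * (A * B) ^ (-m + n) := by rw [← _root_.zpow_add]
      · exact Or.inr ⟨m + n, by rw [mul_assoc, ← _root_.zpow_add]⟩
      · refine Or.inl ⟨-m + n, ?_⟩
        calc (A * (A * B) ^ m) * (A * (A * B) ^ n)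
            = A * (((A * B) ^ m * A) * (A * B) ^ n) := by simp only [mul_assoc]
          _ = A * ((A * (A * B) ^ (-m)) * (A * B) ^ n) := by rw [comm m]
          _ = (A * A) * ((A * B) ^ (-m) * (A * B) ^ n) := by simp only [mul_assoc]
          _ = (A * B) ^ (-m + n) := by rw [hA2, one_mul, ← _root_.zpow_add]
    | inv x hx ih =>
      rcases ih with ⟨n, rfl⟩ | ⟨n, rfl⟩
      · exact Or.inl ⟨-n, by rw [_root_.zpow_neg]⟩
      · refine Or.inr ⟨n, ?_⟩
        rw [_root_.mul_inv_rev, hAinv, ← _root_.zpow_neg, comm (-n), neg_neg]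
  set mc : Matrix (Fin 2) (Fin 2) ℤ := !![-1, -ℓ; ℓ, ℓ * ℓ - 1] with hmc
  have hABval : ((A * B : GL (Fin 2) ℤ) : Matrix (Fin 2) (Fin 2) ℤ) = mc := by
    ext i j
    fin_cases i <;> fin_cases j <;>
      simp [Units.val_mul, hA, hB, Matrix.mul_apply, Fin.sum_univ_two, hmc] <;> ring
  have ent : ∀ a b c d a' b' c' d' : ℤ, !![a,b;c,d] = !![a',b';c',d'] →
      a = a' ∧ b = b' ∧ c = c' ∧ d = d' :=
    fun a b c d a' b' c' d' h =>
      ⟨by simpa using congrFun (congrFun h 0) 0, by simpa using congrFun (congrFun h 0) 1,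
       by simpa using congrFun (congrFun h 1) 0, by simpa using congrFun (congrFun h 1) 1⟩
  have hneg1 : (-1 : Matrix (Fin 2) (Fin 2) ℤ) = !![-1, 0; 0, -1] := by
    ext i j
    fin_cases i <;> fin_cases j <;> simp
  have hpow : ∀ k : ℕ, ∃ a b c d : ℤ, mc ^ k = !![a, b; c, d] ∧
      ℓ ∣ b ∧ ℓ ∣ c ∧ ℓ ∣ (a - d) ∧ 0 ≤ c ∧ c ≤ d ∧ 1 ≤ d ∧ (k ≠ 0 → 1 ≤ c) := by
    intro k
    induction k with
    | zero =>
      exact ⟨1, 0, 0, 1, by rw [pow_zero, Matrix.one_fin_two], dvd_zero _, dvd_zero _,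
        by norm_num, le_refl _, by norm_num, le_refl _, fun h => absurd rfl h⟩
    | succ k ih =>
      obtain ⟨a, b, c, d, hE, hb, hc, had, hc0, hcd, hd1, -⟩ := ih
      have hd0 : (0:ℤ) ≤ d := by linarith
      have h3d : 3 * d ≤ d * ℓ := by nlinarith
      have hdlc : 2 * d ≤ d * ℓ - c := by linarith
      have h2 : 2 * (2 * d) ≤ (ℓ - 1) * (d * ℓ - c) :=
        mul_le_mul (by linarith) hdlc (by linarith) (by linarith)
      refine ⟨a * (-1) + b * ℓ, a * (-ℓ) + b * (ℓ * ℓ - 1),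
        c * (-1) + d * ℓ, c * (-ℓ) + d * (ℓ * ℓ - 1), ?_, ?_, ?_, ?_, ?_, ?_, ?_, ?_⟩
      · rw [pow_succ, hE, hmc, Matrix.mul_fin_two]
      · have h : a * (-ℓ) + b * (ℓ * ℓ - 1) = -(a * ℓ) + b * (ℓ * ℓ - 1) := by ring
        rw [h]
        exact dvd_add (dvd_neg.mpr (dvd_mul_left ℓ a)) (hb.mul_right _)
      · have h : c * (-1) + d * ℓ = -c + d * ℓ := by ring
        rw [h]
        exact dvd_add (dvd_neg.mpr hc) (dvd_mul_left ℓ d)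
      · have h : (a * (-1) + b * ℓ) - (c * (-ℓ) + d * (ℓ * ℓ - 1))
            = -(a - d) + b * ℓ + c * ℓ - (d * ℓ) * ℓ := by ring
        rw [h]
        exact dvd_sub (dvd_add (dvd_add (dvd_neg.mpr had) (dvd_mul_left ℓ b))
          (dvd_mul_left ℓ c)) (dvd_mul_left ℓ (d * ℓ))
      · nlinarith
      · nlinarith [h2]
      · nlinarith [mul_le_mul hℓ hdlc (by linarith) (by linarith)]
      · intro _; nlinarith
  have selfinv : ∀ (M : GL (Fin 2) ℤ) (T : Matrix (Fin 2) (Fin 2) ℤ), T * T = 1 →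
      ((M⁻¹ : GL (Fin 2) ℤ) : Matrix (Fin 2) (Fin 2) ℤ) = T →
      ((M : GL (Fin 2) ℤ) : Matrix (Fin 2) (Fin 2) ℤ) = T := by
    intro M T hT h
    have h1 : (M : Matrix (Fin 2) (Fin 2) ℤ) * T = 1 := by
      rw [← h, ← Units.val_mul, mul_inv_cancel, Units.val_one]
    calc (M : Matrix (Fin 2) (Fin 2) ℤ) = (M : Matrix (Fin 2) (Fin 2) ℤ) * (T * T) := by
          rw [hT, mul_one]
      _ = ((M : Matrix (Fin 2) (Fin 2) ℤ) * T) * T := by rw [mul_assoc]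
      _ = T := by rw [h1, one_mul]
  have hT1 : (-1 : Matrix (Fin 2) (Fin 2) ℤ) * (-1) = 1 := by rw [neg_mul_neg, one_mul]
  have hT2 : (!![0, -1; -1, 0] : Matrix (Fin 2) (Fin 2) ℤ) * !![0, -1; -1, 0] = 1 := by
    rw [Matrix.mul_fin_two, Matrix.one_fin_two]; norm_num
  have hldvd1 : ¬ ℓ ∣ (1 : ℤ) := fun h => by have := Int.le_of_dvd one_pos h; omega
  have hldvd2 : ¬ ℓ ∣ (2 : ℤ) := fun h => by
    have := Int.le_of_dvd (by norm_num) h; omega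
  have core1 : ∀ k : ℕ, mc ^ k ≠ -1 ∧ mc ^ k ≠ !![0, -1; -1, 0] := by
    intro k
    obtain ⟨a, b, c, d, hE, hb, hc, had, hc0, hcd, hd1, hk⟩ := hpow k
    constructor
    · intro h
      rw [hE, hneg1] at h
      obtain ⟨h1, h2, h3, h4⟩ := ent _ _ _ _ _ _ _ _ h
      rcases Nat.eq_zero_or_pos k with rfl | hk0
      · rw [pow_zero, Matrix.one_fin_two] at hE
        obtain ⟨h1', -, -, -⟩ := ent _ _ _ _ _ _ _ _ hE
        omega
      · have := hk (by omega)
        omega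
    · intro h
      rw [hE] at h
      obtain ⟨h1, h2, h3, h4⟩ := ent _ _ _ _ _ _ _ _ h
      rw [h2] at hb
      exact hldvd1 ((dvd_neg).mp hb)
  have coreA1 : ∀ k : ℕ, !![-1,0;ℓ,1] * mc ^ k ≠ -1 ∧
      !![-1,0;ℓ,1] * mc ^ k ≠ !![0, -1; -1, 0] := by
    intro k
    obtain ⟨a, b, c, d, hE, ⟨b₀, rfl⟩, ⟨c₀, rfl⟩, ⟨e, he⟩, -, -, -, -⟩ := hpow k
    rw [hE, Matrix.mul_fin_two]
    constructor
    · intro h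
      rw [hneg1] at h
      obtain ⟨h1, h2, h3, h4⟩ := ent _ _ _ _ _ _ _ _ h
      exact hldvd2 ⟨e - ℓ * b₀, by linear_combination he + h1 + h4⟩
    · intro h
      obtain ⟨h1, h2, h3, h4⟩ := ent _ _ _ _ _ _ _ _ h
      exact hldvd1 ⟨b₀, by linear_combination h2⟩
  have coreA2 : ∀ k : ℕ, mc ^ k * !![-1,0;ℓ,1] ≠ -1 ∧
      mc ^ k * !![-1,0;ℓ,1] ≠ !![0, -1; -1, 0] := by
    intro k
    obtain ⟨a, b, c, d, hE, ⟨b₀, rfl⟩, ⟨c₀, rfl⟩, ⟨e, he⟩, -, -, -, -⟩ := hpow k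
    rw [hE, Matrix.mul_fin_two]
    constructor
    · intro h
      rw [hneg1] at h
      obtain ⟨h1, h2, h3, h4⟩ := ent _ _ _ _ _ _ _ _ h
      exact hldvd2 ⟨e - ℓ * b₀, by linear_combination he + h1 + h4⟩
    · intro h
      obtain ⟨h1, h2, h3, h4⟩ := ent _ _ _ _ _ _ _ _ h
      exact hldvd1 ⟨-b₀, by linear_combination h2⟩
  intro M hM
  rcases key M hM with ⟨n, rfl⟩ | ⟨n, rfl⟩ <;>
    obtain ⟨k, rfl | rfl⟩ := Int.eq_nat_or_neg n
  · rw [zpow_natCast, Units.val_pow_eq_pow_val, hABval]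
    exact core1 k
  · constructor
    · intro h
      have h' := selfinv ((A * B) ^ (k:ℤ)) _ hT1 (by rw [← _root_.zpow_neg]; exact h)
      rw [zpow_natCast, Units.val_pow_eq_pow_val, hABval] at h'
      exact (core1 k).1 h'
    · intro h
      have h' := selfinv ((A * B) ^ (k:ℤ)) _ hT2 (by rw [← _root_.zpow_neg]; exact h)
      rw [zpow_natCast, Units.val_pow_eq_pow_val, hABval] at h'
      exact (core1 k).2 h'
  · have hval : ((A * (A * B) ^ (k:ℤ) : GL (Fin 2) ℤ) : Matrix (Fin 2) (Fin 2) ℤ)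
        = !![-1,0;ℓ,1] * mc ^ k := by
      rw [Units.val_mul, hA, zpow_natCast, Units.val_pow_eq_pow_val, hABval]
    rw [hval]
    exact coreA1 k
  · have heq : A * (A * B) ^ (-(k:ℤ)) = (A * B) ^ (k:ℤ) * A := (comm k).symm
    have hval : ((A * (A * B) ^ (-(k:ℤ)) : GL (Fin 2) ℤ) : Matrix (Fin 2) (Fin 2) ℤ)
        = mc ^ k * !![-1,0;ℓ,1] := by
      rw [heq, Units.val_mul, hA, zpow_natCast, Units.val_pow_eq_pow_val, hABval]
    rw [hval]
    exact coreA2 k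
end

section
/- Let m ≥ 4 be an integer and set G := [[m−1, 1], [−m, −1]], a 2×2 integer matrix of determinant 1. Then for every natural number s ≥ 0, Gˢ ≠ −I, and Gˢ · [[1, 1], [0, −1]] ≠ [[0, −1], [−1, 0]]. -/
open Matrix

/-- For an integer `m ≥ 4` and `G = [[m-1,1],[-m,-1]]`, for every natural number `s`
we have `G^s ≠ -I` and `G^s * [[1,1],[0,-1]] ≠ [[0,-1],[-1,0]]`. -/
theorem stmt_7 (m : ℤ) (hm : 4 ≤ m)
    (G : Matrix (Fin 2) (Fin 2) ℤ) (hG : G = !![m - 1, 1; -m, -1]) :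
    ∀ s : ℕ, G ^ s ≠ -1 ∧ G ^ s * !![1, 1; 0, -1] ≠ !![0, -1; -1, 0] := by
  have key : ∀ s : ℕ, 0 ≤ (G ^ s) 0 1 ∧ (m - 2) * (G ^ s) 0 1 + 1 ≤ (G ^ s) 0 0 := by
    intro s
    induction s with
    | zero => simp [Matrix.one_apply]
    | succ n ih =>
      obtain ⟨hb, ha⟩ := ih
      have hmb : 0 ≤ (m - 4) * (G ^ n) 0 1 :=
        mul_nonneg (by linarith) hb
      have e1 : (G ^ (n + 1)) 0 0 = (G ^ n) 0 0 * (m - 1) + (G ^ n) 0 1 * (-m) := by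
        rw [pow_succ, Matrix.mul_apply, Fin.sum_univ_two, hG]
        simp
      have e2 : (G ^ (n + 1)) 0 1 = (G ^ n) 0 0 - (G ^ n) 0 1 := by
        rw [pow_succ, Matrix.mul_apply, Fin.sum_univ_two, hG]
        simp
        ring
      constructor
      · rw [e2]; nlinarith
      · rw [e1, e2]; nlinarith
  intro s
  obtain ⟨hb, ha⟩ := key s
  have hmb : 0 ≤ (m - 2) * (G ^ s) 0 1 := mul_nonneg (by linarith) hb
  constructor
  · intro h
    have h00 := congrFun (congrFun h 0) 0
    simp [Matrix.neg_apply, Matrix.one_apply] at h00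
    omega
  · intro h
    have h00 := congrFun (congrFun h 0) 0
    rw [Matrix.mul_apply, Fin.sum_univ_two] at h00
    simp at h00
    omega
end

section
/- Let ℓ ≥ 2 and m ≥ 2 be integers. Define a sequence of integers by a₁ = 0, a₂ = 1 and a_{t+1} = ℓ·a_t − a_{t−1} for t ≥ 2. Then the sequence d_t := 2m·(a_{t+1})² − 2ℓ·a_{t+1}·a_t + 2·(a_t)² tends to +∞ as t → ∞. -/
open Filter

set_option maxHeartbeats 800000 in
/-- For integers `ℓ, m ≥ 2` and the sequence `a₁ = 0`, `a₂ = 1`,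
`a_{t+1} = ℓ a_t - a_{t-1}` for `t ≥ 2`, the sequence
`d_t = 2m a_{t+1}² - 2ℓ a_{t+1} a_t + 2 a_t²` tends to `+∞`. -/
theorem stmt_9 (ℓ m : ℤ) (hℓ : 2 ≤ ℓ) (hm : 2 ≤ m)
    (a : ℕ → ℤ) (ha1 : a 1 = 0) (ha2 : a 2 = 1)
    (harec : ∀ t : ℕ, 2 ≤ t → a (t + 1) = ℓ * a t - a (t - 1)) :
    Tendsto (fun t : ℕ =>
      2 * m * (a (t + 1)) ^ 2 - 2 * ℓ * (a (t + 1)) * (a t) + 2 * (a t) ^ 2)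
      atTop atTop := by
  -- basic monotonicity: for t ≥ 1, a t ≥ 0 and a t + 1 ≤ a (t+1)
  have key : ∀ t : ℕ, 1 ≤ t → 0 ≤ a t ∧ a t + 1 ≤ a (t + 1) := by
    intro t ht
    induction t, ht using Nat.le_induction with
    | base => simp [ha1, ha2]
    | succ t ht ih =>
      obtain ⟨h0, h1⟩ := ih
      have h0' : 0 ≤ a (t + 1) := by linarith
      have hrec := harec (t + 1) (by omega)
      simp only [Nat.add_sub_cancel] at hrec
      constructor
      · exact h0'
      · have h2 : 2 * a (t + 1) ≤ ℓ * a (t + 1) := by nlinarith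
        linarith [hrec, h2]
  -- a t ≥ t - 2 for t ≥ 1
  have growth : ∀ t : ℕ, 1 ≤ t → (t : ℤ) - 2 ≤ a t := by
    intro t ht
    induction t, ht using Nat.le_induction with
    | base => simp [ha1]
    | succ t ht ih =>
      have := (key t ht).2
      push_cast
      linarith
  -- lower bound on d t for t ≥ 2
  have dlb : ∀ t : ℕ, 2 ≤ t →
      (t : ℤ) - 2 ≤ 2 * m * (a (t + 1)) ^ 2 - 2 * ℓ * (a (t + 1)) * (a t)
        + 2 * (a t) ^ 2 := by
    intro t ht
    have hrec := harec t ht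
    have h1 := key t (by omega)
    have h2 : 0 ≤ a (t - 1) ∧ a (t - 1) + 1 ≤ a (t - 1 + 1) := key (t - 1) (by omega)
    have htt : t - 1 + 1 = t := by omega
    rw [htt] at h2
    have hg := growth t (by omega)
    have hℓa : ℓ * a t = a (t + 1) + a (t - 1) := by linarith [hrec]
    have hb : a (t - 1) ≤ a (t + 1) := by linarith [h1.2, h2.2]
    have hA : 0 ≤ a (t + 1) := by linarith [h1.1, h1.2]
    have hd : 2 * (a t) ^ 2 ≤ 2 * m * (a (t + 1)) ^ 2 - 2 * ℓ * (a (t + 1)) * (a t)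
        + 2 * (a t) ^ 2 := by
      nlinarith [mul_nonneg hA (sub_nonneg.2 hb), sq_nonneg (a (t + 1)), hm, hℓa]
    have hB : a t ≤ 2 * (a t) ^ 2 := by
      rcases h1.1.eq_or_lt with h | h
      · rw [← h]; ring_nf; nlinarith []
      · have h1' : 1 ≤ a t := h
        nlinarith [mul_le_mul_of_nonneg_left h1' (le_of_lt h)]
    linarith [hd, hB, hg]
  have hten : Tendsto (fun t : ℕ => (t : ℤ) - 2) atTop atTop :=
    tendsto_atTop_add_const_right _ (-2) tendsto_natCast_atTop_atTop |>.congr (by intro x; ring)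
  refine tendsto_atTop_mono' atTop ?_ hten
  filter_upwards [eventually_ge_atTop 2] with t ht
  exact dlb t ht
end

section
/- Consider the subgroup H of GL(2, ℤ) generated by the matrices [[−1, 0], [2, 1]] and [[1, 2], [0, −1]]. Then every matrix M ∈ H satisfies (1, 1)·M = (1, 1) (the all-ones row vector is fixed under right multiplication by M); consequently, neither −I nor [[0, −1], [−1, 0]] belongs to H. -/
open Matrix

/-- Every matrix `M` in the subgroup of `GL(2, ℤ)` generated by `[[-1,0],[2,1]]` and
`[[1,2],[0,-1]]` fixes the all-ones row vector under right multiplication; consequently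
neither `-I` nor `[[0,-1],[-1,0]]` belongs to this subgroup. -/
theorem stmt_11 (A B : Matrix.GeneralLinearGroup (Fin 2) ℤ)
    (hA : (A : Matrix (Fin 2) (Fin 2) ℤ) = !![-1, 0; 2, 1])
    (hB : (B : Matrix (Fin 2) (Fin 2) ℤ) = !![1, 2; 0, -1]) :
    (∀ M ∈ Subgroup.closure {A, B},
      ![(1 : ℤ), 1] ᵥ* (M : Matrix (Fin 2) (Fin 2) ℤ) = ![1, 1]) ∧
    (∀ M ∈ Subgroup.closure {A, B},
      (M : Matrix (Fin 2) (Fin 2) ℤ) ≠ -1 ∧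
      (M : Matrix (Fin 2) (Fin 2) ℤ) ≠ !![0, -1; -1, 0]) := by
  have key : ∀ M ∈ Subgroup.closure {A, B},
      ![(1 : ℤ), 1] ᵥ* (M : Matrix (Fin 2) (Fin 2) ℤ) = ![1, 1] := by
    intro M hM
    induction hM using Subgroup.closure_induction with
    | mem x hx =>
      rcases hx with h | h <;> subst h
      · rw [hA]; ext i; fin_cases i <;> simp [vecMul, dotProduct, Fin.sum_univ_two]
      · rw [hB]; ext i; fin_cases i <;> simp [vecMul, dotProduct, Fin.sum_univ_two]
    | one => simp
    | mul x y _ _ hx hy =>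
      push_cast
      rw [← vecMul_vecMul, hx, hy]
    | inv x _ hx =>
      have := congrArg (fun v => v ᵥ* ((x : Matrix.GeneralLinearGroup (Fin 2) ℤ)⁻¹ :
        Matrix (Fin 2) (Fin 2) ℤ)) hx
      simpa [vecMul_vecMul, ← Matrix.GeneralLinearGroup.coe_mul, mul_inv_cancel] using this.symm
  refine ⟨key, fun M hM => ⟨?_, ?_⟩⟩ <;> intro h <;> have := key M hM <;> rw [h] at this
  · have := congrFun this 0
    simp [vecMul, dotProduct, Fin.sum_univ_two] at this
  · have := congrFun this 0
    simp [vecMul, dotProduct, Fin.sum_univ_two] at this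
end
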